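/- Free groups are residually solvable: for every element g ≠ 1 of a free group F, there exists a solvable group S and a surjective homomorphism φ : F → S with φ(g) ≠ 1. -/

import Mathlib

section Aux

-- Pi of a solvable group is solvable
lemma isSolvable_pi {I : Type*} {S : Type*} [Group S] [hS : Group.IsSolvable S] :
    Group.IsSolvable (I → S) := by
  obtain ⟨n, hn⟩ := hS.solvable
  refine ⟨⟨n, ?_⟩⟩
  rw [Subgroup.eq_bot_iff_forall]
  intro f hf
  funext i
  have h1 := map_derivedSeries_le_derivedSeries (Pi.evalMonoidHom (fun _ : I => S) i) n
  have h2 : f i ∈ derivedSeries S n := h1 ⟨f, hf, rfl⟩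
  rw [hn] at h2
  simpa using h2

lemma isSolvable_sdp {N G : Type*} [Group N] [Group G] (φ : G →* MulAut N)
    [Group.IsSolvable N] [Group.IsSolvable G] : Group.IsSolvable (N ⋊[φ] G) :=
  solvable_of_ker_le_range SemidirectProduct.inl SemidirectProduct.rightHom
    (le_of_eq SemidirectProduct.range_inl_eq_ker_rightHom.symm)

-- shift action of Multiplicative ℤ on ℤ → S
def shiftEquiv (S : Type*) [Group S] (z : ℤ) : (ℤ → S) ≃* (ℤ → S) where
  toFun f j := f (j - z)
  invFun f j := f (j + z)
  left_inv f := by funext j; simp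
  right_inv f := by funext j; simp
  map_mul' f g := rfl

def sh (S : Type*) [Group S] : Multiplicative ℤ →* MulAut (ℤ → S) where
  toFun z := shiftEquiv S z.toAdd
  map_one' := by ext f j; simp [shiftEquiv]
  map_mul' z w := by ext f j; simp [shiftEquiv, sub_add_eq_sub_sub]

variable {α : Type} [DecidableEq α] (x : α)

def xsum : List (α × Bool) → ℤ
  | [] => 0
  | (y, b) :: L => (if y = x then (if b then (1:ℤ) else -1) else 0) + xsum L

def rwList : ℤ → List (α × Bool) → List (({ y : α // y ≠ x } × ℤ) × Bool)
  | _, [] => []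
  | e, (y, b) :: L =>
      if h : y = x then rwList (e + (if b then 1 else -1)) L
      else ((⟨y, h⟩, e), b) :: rwList e L

lemma rwList_length (e : ℤ) (L : List (α × Bool)) : (rwList x e L).length ≤ L.length := by
  induction L generalizing e with
  | nil => simp [rwList]
  | cons p L ih =>
    obtain ⟨y, b⟩ := p
    by_cases h : y = x <;> simp [rwList, h]
    · exact le_trans (ih _) (Nat.le_succ _)
    · exact ih _

def expHom : FreeGroup α →* Multiplicative ℤ :=
  FreeGroup.lift fun y => Multiplicative.ofAdd (if y = x then (1:ℤ) else 0)

lemma mk_cons (p : α × Bool) (L : List (α × Bool)) :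
    FreeGroup.mk (p :: L) = (if p.2 then FreeGroup.of p.1 else (FreeGroup.of p.1)⁻¹) * FreeGroup.mk L := by
  obtain ⟨y, b⟩ := p
  cases b <;> simp [FreeGroup.of, FreeGroup.inv_mk, FreeGroup.invRev, FreeGroup.mul_mk]

lemma expHom_mk (L : List (α × Bool)) :
    expHom x (FreeGroup.mk L) = Multiplicative.ofAdd (xsum x L) := by
  induction L with
  | nil => simp [← FreeGroup.one_eq_mk, xsum]
  | cons p L ih =>
    obtain ⟨y, b⟩ := p
    rw [mk_cons, map_mul, ih]
    cases b <;> by_cases h : y = x <;>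
      simp [expHom, xsum, h, ← ofAdd_add, ← ofAdd_neg] <;> ring_nf

def conjHom : FreeGroup ({ y : α // y ≠ x } × ℤ) →* FreeGroup α :=
  FreeGroup.lift fun p => (FreeGroup.of x) ^ p.2 * FreeGroup.of p.1.1 * (FreeGroup.of x) ^ (-p.2)

lemma conj_rw (e : ℤ) (L : List (α × Bool)) :
    conjHom x (FreeGroup.mk (rwList x e L)) =
      (FreeGroup.of x) ^ e * FreeGroup.mk L * (FreeGroup.of x) ^ (-(e + xsum x L)) := by
  induction L generalizing e with
  | nil => simp [rwList, xsum, ← FreeGroup.one_eq_mk, ← zpow_add]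
  | cons p L ih =>
    obtain ⟨y, b⟩ := p
    by_cases h : y = x
    · subst h
      have hmk : FreeGroup.mk ((y, b) :: L) =
          (FreeGroup.of y) ^ (if b then (1:ℤ) else -1) * FreeGroup.mk L := by
        cases b <;> simp [mk_cons]
      rw [show rwList y e ((y, b) :: L) = rwList y (e + (if b then 1 else -1)) L from by
        simp [rwList], ih, hmk]
      have hx : xsum y ((y, b) :: L) = (if b then (1:ℤ) else -1) + xsum y L := by
        simp [xsum]
      rw [hx, zpow_add]
      group
    · have hrw : rwList x e ((y, b) :: L) = ((⟨y, h⟩, e), b) :: rwList x e L := by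
        simp [rwList, h]
      have hx : xsum x ((y, b) :: L) = xsum x L := by simp [xsum, h]
      rw [hrw, mk_cons, map_mul, ih, hx, mk_cons]
      cases b <;> simp [conjHom] <;> group

end Aux

lemma key : ∀ (n : ℕ) (α : Type) (g : FreeGroup α) (L : List (α × Bool)),
    FreeGroup.mk L = g → L.length ≤ n → g ≠ 1 →
    ∃ (S : Type) (_ : Group S), IsSolvable S ∧ ∃ φ : FreeGroup α →* S, φ g ≠ 1 := by
  intro n
  induction n with
  | zero =>
    intro α g L hL hlen hg
    rw [Nat.le_zero, List.length_eq_zero_iff] at hlen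
    exact absurd (by rw [← hL, hlen, ← FreeGroup.one_eq_mk]) hg
  | succ n IH =>
    intro α g L hL hlen hg
    classical
    match L, hL, hlen with
    | [], hL, hlen => exact absurd (by rw [← hL, ← FreeGroup.one_eq_mk]) hg
    | (y, b) :: L', hL, hlen =>
      set x := y with hx
      by_cases hchi : expHom x g = 1
      · -- exponent sum of x is zero
        have hs : xsum x ((y, b) :: L') = 0 := by
          have h1 := expHom_mk x ((y, b) :: L')
          rw [hL, hchi] at h1
          exact Multiplicative.ofAdd.injective h1.symm
        set g' := FreeGroup.mk (rwList x 0 ((y, b) :: L')) with hg'def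
        have hι : conjHom x g' = g := by
          rw [hg'def, conj_rw, hs, hL]
          group
        have hg' : g' ≠ 1 := fun h => hg (by rw [← hι, h, map_one])
        have hlen' : (rwList x 0 ((y, b) :: L')).length ≤ n := by
          rw [show rwList x 0 ((y, b) :: L') = rwList x (0 + (if b then 1 else -1)) L' from by
            simp [rwList, hx]]
          exact le_trans (rwList_length x _ L') (Nat.succ_le_succ_iff.mp hlen)
        obtain ⟨S, instS, hS, ψ, hψ⟩ := IH _ g' _ rfl hlen' hg'
        -- wreath product
        refine ⟨(ℤ → S) ⋊[sh S] Multiplicative ℤ, inferInstance, ?_, ?_⟩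
        · haveI : Group.IsSolvable S := hS
          haveI : Group.IsSolvable (ℤ → S) := isSolvable_pi
          exact isSolvable_sdp (sh S)
        · set Φ : FreeGroup α →* (ℤ → S) ⋊[sh S] Multiplicative ℤ :=
            FreeGroup.lift fun z =>
              if h : z = x then SemidirectProduct.inr (Multiplicative.ofAdd (1:ℤ))
              else SemidirectProduct.inl (fun j => ψ (FreeGroup.of (⟨z, h⟩, -j))) with hΦ
          set Ψ : FreeGroup ({ z : α // z ≠ x } × ℤ) →* (ℤ → S) :=
            FreeGroup.lift fun p => (fun j => ψ (FreeGroup.of (p.1, p.2 - j))) with hΨ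
          have hcomp : Φ.comp (conjHom x) =
              (SemidirectProduct.inl : (ℤ → S) →* _).comp Ψ := by
            apply FreeGroup.ext_hom
            intro p
            obtain ⟨⟨z, hz⟩, i⟩ := p
            simp only [MonoidHom.comp_apply, conjHom, FreeGroup.lift_apply_of, hΨ, hΦ]
            rw [map_mul, map_mul, map_zpow, map_zpow, FreeGroup.lift_apply_of, FreeGroup.lift_apply_of,
              dif_pos rfl, dif_neg hz, ← map_zpow SemidirectProduct.inr, ← map_zpow SemidirectProduct.inr]
            rw [show (Multiplicative.ofAdd (1:ℤ)) ^ (-i) = ((Multiplicative.ofAdd (1:ℤ)) ^ i)⁻¹ from by group]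
            rw [← SemidirectProduct.inl_aut]
            congr 1
            funext j
            have : (Multiplicative.ofAdd (1:ℤ)) ^ i = Multiplicative.ofAdd i := by
              simp [← ofAdd_zsmul]
            rw [this]
            show ψ (FreeGroup.of (⟨z, hz⟩, -(j - i))) = ψ (FreeGroup.of (⟨z, hz⟩, i - j))
            rw [neg_sub]
          have hΦg : Φ g = SemidirectProduct.inl (Ψ g') := by
            rw [← hι]
            exact DFunLike.congr_fun hcomp g'
          refine ⟨Φ, ?_⟩
          rw [hΦg]
          intro hcon
          apply hψ
          have h0 : Ψ g' = 1 := SemidirectProduct.inl_injective (by simpa using hcon)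
          have hev : (Pi.evalMonoidHom (fun _ : ℤ => S) 0).comp Ψ = ψ := by
            apply FreeGroup.ext_hom
            intro p
            simp [hΨ, Pi.evalMonoidHom]
          rw [← hev]
          simp [h0]
      · exact ⟨Multiplicative ℤ, inferInstance, (inferInstance : Group.IsSolvable (Multiplicative ℤ)), expHom x, hchi⟩

theorem freeGroup_residually_solvable (α : Type) (g : FreeGroup α) (hg : g ≠ 1) :
    ∃ (S : Type) (instS : Group S), IsSolvable S ∧
      ∃ φ : FreeGroup α →* S, Function.Surjective φ ∧ φ g ≠ 1 := by
  classical
  obtain ⟨S, instS, hS, φ, hφ⟩ := key g.toWord.length α g g.toWord FreeGroup.mk_toWord le_rfl hg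
  letI := instS
  haveI : Group.IsSolvable S := hS
  refine ⟨φ.range, inferInstance, (inferInstance : Group.IsSolvable φ.range), φ.rangeRestrict, φ.rangeRestrict_surjective, ?_⟩
  intro h
  apply hφ
  have := congrArg (Subtype.val) h
  simpa using this
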